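/- Fix real numbers a < b, a positive integer k, and constants M, B > 0. Suppose that for all n ≥ 1, all integers 0 ≤ l, m ≤ k, and all t ∈ [na, nb], one has |K_n^{(l,m)}(t/n, t/n)| ≤ M n^{l+m+1} and K_n(t/n, t/n) ≥ B n. For t ∈ [na, nb] define q_j(t) = p_j(t/n)/√(K_n(t/n, t/n)). Then there exists a constant C_k > 0, depending only on k, a, b, M, B (not on n), such that Σ_{j=0}^n (q_j^{(k)}(t))² ≤ C_k for all n ≥ 1 and all t ∈ [na, nb]. -/

import Mathlib

set_option autoImplicit false

open MeasureTheory Real Set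

/-- `Kder p n l m x y = ∑_{j=0}^n p_j^{(l)}(x) p_j^{(m)}(y)`. -/
noncomputable def Kder (p : ℕ → Polynomial ℝ) (n l m : ℕ) (x y : ℝ) : ℝ :=
  ∑ j ∈ Finset.range (n + 1),
    (Polynomial.derivative^[l] (p j)).eval x * (Polynomial.derivative^[m] (p j)).eval y

noncomputable def Rp (p : ℕ → Polynomial ℝ) (n : ℕ) (j : ℕ) : Polynomial ℝ :=
  (p j).comp (Polynomial.C ((n : ℝ))⁻¹ * Polynomial.X)

noncomputable def Qp (p : ℕ → Polynomial ℝ) (n : ℕ) : Polynomial ℝ :=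
  ∑ j ∈ Finset.range (n + 1), Rp p n j * Rp p n j

lemma iter_deriv_comp_C_mul_X (P : Polynomial ℝ) (c : ℝ) (l : ℕ) :
    Polynomial.derivative^[l] (P.comp (Polynomial.C c * Polynomial.X))
      = Polynomial.C (c ^ l) * (Polynomial.derivative^[l] P).comp (Polynomial.C c * Polynomial.X) := by
  induction l generalizing P with
  | zero => simp
  | succ l ih =>
    rw [Function.iterate_succ_apply, Polynomial.derivative_comp]
    simp only [Polynomial.derivative_mul, Polynomial.derivative_C, Polynomial.derivative_X,
      zero_mul, mul_one, zero_add]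
    rw [Polynomial.iterate_derivative_C_mul, ih, ← mul_assoc, ← Polynomial.C_mul,
      Function.iterate_succ_apply]
    ring_nf

lemma Rp_iter_eval (p : ℕ → Polynomial ℝ) (n j l : ℕ) (t : ℝ) :
    (Polynomial.derivative^[l] (Rp p n j)).eval t
      = ((n : ℝ))⁻¹ ^ l * (Polynomial.derivative^[l] (p j)).eval (t / n) := by
  rw [Rp, iter_deriv_comp_C_mul_X]
  simp only [Polynomial.eval_mul, Polynomial.eval_C, Polynomial.eval_comp, Polynomial.eval_X]
  rw [div_eq_mul_inv, mul_comm t]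

lemma Qp_iter_eval (p : ℕ → Polynomial ℝ) (n i : ℕ) (t : ℝ) :
    (Polynomial.derivative^[i] (Qp p n)).eval t
      = ((n : ℝ))⁻¹ ^ i * ∑ l ∈ Finset.range (i + 1),
          (i.choose l : ℝ) * Kder p n (i - l) l (t / n) (t / n) := by
  rw [Qp, Polynomial.iterate_derivative_sum]
  simp only [Polynomial.eval_finset_sum, Polynomial.iterate_derivative_mul, Polynomial.eval_smul,
    smul_eq_mul, Polynomial.eval_mul, Rp_iter_eval]
  rw [Finset.sum_comm, Finset.mul_sum]
  refine Finset.sum_congr rfl fun l hl => ?_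
  have hl' : l ≤ i := Nat.lt_succ_iff.mp (Finset.mem_range.mp hl)
  have hpow : ((n : ℝ))⁻¹ ^ (i - l) * ((n : ℝ))⁻¹ ^ l = ((n : ℝ))⁻¹ ^ i := by
    rw [← pow_add, Nat.sub_add_cancel hl']
  rw [Kder, Finset.mul_sum, Finset.mul_sum]
  refine Finset.sum_congr rfl fun j _ => ?_
  rw [nsmul_eq_mul, ← hpow]; ring
lemma abs_eval_iter_deriv_mul_le (P Q : Polynomial ℝ) (s : ℕ) (t C D : ℝ)
    (hC : 0 ≤ C) (hD : 0 ≤ D)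
    (hP : ∀ l ≤ s, |(Polynomial.derivative^[l] P).eval t| ≤ C)
    (hQ : ∀ l ≤ s, |(Polynomial.derivative^[l] Q).eval t| ≤ D) :
    |(Polynomial.derivative^[s] (P * Q)).eval t| ≤ 2 ^ s * C * D := by
  rw [Polynomial.iterate_derivative_mul]
  calc |(∑ l ∈ Finset.range (s + 1),
          (s.choose l) • (Polynomial.derivative^[s - l] P * Polynomial.derivative^[l] Q)).eval t|
      = |∑ l ∈ Finset.range (s + 1), (s.choose l : ℝ) *
          ((Polynomial.derivative^[s - l] P).eval t * (Polynomial.derivative^[l] Q).eval t)| := by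
        simp [Polynomial.eval_finset_sum]
    _ ≤ ∑ l ∈ Finset.range (s + 1), (s.choose l : ℝ) * (C * D) := by
        refine (Finset.abs_sum_le_sum_abs _ _).trans (Finset.sum_le_sum fun l hl => ?_)
        have hl' : l ≤ s := Nat.lt_succ_iff.mp (Finset.mem_range.mp hl)
        rw [abs_mul, abs_mul, Nat.abs_cast]
        exact mul_le_mul_of_nonneg_left
          (mul_le_mul (hP _ (Nat.sub_le _ _)) (hQ _ hl') (abs_nonneg _) hC)
          (Nat.cast_nonneg _)
    _ = 2 ^ s * C * D := by
        rw [← Finset.sum_mul]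
        norm_cast
        rw [Nat.sum_range_choose]
        ring

lemma Qp_eval (p : ℕ → Polynomial ℝ) (n : ℕ) (t : ℝ) :
    (Qp p n).eval t = Kder p n 0 0 (t / n) (t / n) := by
  have := Qp_iter_eval p n 0 t
  simpa using this

section Bounds

variable (a b M B : ℝ) (k : ℕ) (p : ℕ → Polynomial ℝ)

lemma Qp_iter_bound (hM : 0 < M)
    (hup : ∀ n : ℕ, 1 ≤ n → ∀ l ≤ k, ∀ m ≤ k, ∀ t ∈ Set.Icc ((n : ℝ) * a) ((n : ℝ) * b),
      |Kder p n l m (t / n) (t / n)| ≤ M * (n : ℝ) ^ (l + m + 1)) :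
    ∀ n : ℕ, 1 ≤ n → ∀ i ≤ k, ∀ t ∈ Set.Icc ((n : ℝ) * a) ((n : ℝ) * b),
      |(Polynomial.derivative^[i] (Qp p n)).eval t| ≤ 2 ^ i * M * n := by
  intro n hn i hi t ht
  have hn0 : (0 : ℝ) < n := by exact_mod_cast hn
  rw [Qp_iter_eval, abs_mul, abs_pow, abs_inv, abs_of_pos hn0]
  calc ((n:ℝ))⁻¹ ^ i * |∑ l ∈ Finset.range (i + 1),
        (i.choose l : ℝ) * Kder p n (i - l) l (t / n) (t / n)|
      ≤ ((n:ℝ))⁻¹ ^ i * ∑ l ∈ Finset.range (i + 1),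
        (i.choose l : ℝ) * (M * (n : ℝ) ^ (i + 1)) := by
        refine mul_le_mul_of_nonneg_left
          ((Finset.abs_sum_le_sum_abs _ _).trans (Finset.sum_le_sum fun l hl => ?_))
          (by positivity)
        have hl' : l ≤ i := Nat.lt_succ_iff.mp (Finset.mem_range.mp hl)
        rw [abs_mul, Nat.abs_cast]
        refine mul_le_mul_of_nonneg_left ?_ (Nat.cast_nonneg _)
        have := hup n hn (i - l) (le_trans (Nat.sub_le _ _) hi) l (le_trans hl' hi) t ht
        rwa [show i - l + l + 1 = i + 1 by omega] at this
    _ = 2 ^ i * M * n := by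
        rw [← Finset.sum_mul]
        norm_cast
        rw [Nat.sum_range_choose]
        push_cast
        field_simp
        rw [one_div, inv_pow, pow_succ, ← mul_assoc, inv_mul_cancel₀ (pow_pos hn0 i).ne', one_mul]

end Bounds

noncomputable def Gp (p : ℕ → Polynomial ℝ) (n : ℕ) : ℕ → Polynomial ℝ
  | 0 => 1
  | (r + 1) => (Gp p n r).derivative * Qp p n
      - Polynomial.C ((r : ℝ) + 1/2) * (Gp p n r * (Qp p n).derivative)

section Bounds2

variable (a b M B : ℝ) (k : ℕ) (p : ℕ → Polynomial ℝ)

lemma Gp_bound (hM : 0 < M)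
    (hQb : ∀ n : ℕ, 1 ≤ n → ∀ i ≤ k, ∀ t ∈ Set.Icc ((n : ℝ) * a) ((n : ℝ) * b),
      |(Polynomial.derivative^[i] (Qp p n)).eval t| ≤ 2 ^ i * M * n) :
    ∀ r : ℕ, ∃ A : ℝ, 0 < A ∧ ∀ s : ℕ, r + s ≤ k → ∀ n : ℕ, 1 ≤ n →
      ∀ t ∈ Set.Icc ((n : ℝ) * a) ((n : ℝ) * b),
        |(Polynomial.derivative^[s] (Gp p n r)).eval t| ≤ A * (n : ℝ) ^ r := by
  intro r
  induction r with
  | zero =>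
    refine ⟨1, one_pos, fun s hs n hn t ht => ?_⟩
    rcases Nat.eq_zero_or_pos s with hs0 | hs0
    · subst hs0; simp [Gp]
    · rw [show Gp p n 0 = 1 from rfl, Polynomial.iterate_derivative_one hs0]
      simp
  | succ r ih =>
    obtain ⟨A, hA, hAb⟩ := ih
    refine ⟨((r : ℝ) + 2) * 4 ^ k * M * A, by positivity, fun s hs n hn t ht => ?_⟩
    have hn0 : (0 : ℝ) < n := by exact_mod_cast hn
    have hsk : s + 1 ≤ k := by omega
    have hG : Gp p n (r + 1) = (Gp p n r).derivative * Qp p n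
        - Polynomial.C ((r : ℝ) + 1/2) * (Gp p n r * (Qp p n).derivative) := rfl
    have hQD : (0 : ℝ) ≤ 2 ^ k * M * n := by positivity
    have hCD : (0 : ℝ) ≤ A * (n : ℝ) ^ r := by positivity
    -- bound for derivatives of Q up to order s+1
    have hQ' : ∀ l ≤ s + 1, |(Polynomial.derivative^[l] (Qp p n)).eval t| ≤ 2 ^ k * M * n := by
      intro l hl
      refine (hQb n hn l (le_trans hl hsk) t ht).trans ?_
      have h2lk : (2 : ℝ) ^ l ≤ 2 ^ k := pow_le_pow_right₀ one_le_two (le_trans hl hsk)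
      exact mul_le_mul_of_nonneg_right (mul_le_mul_of_nonneg_right h2lk hM.le) hn0.le
    have h1 : |(Polynomial.derivative^[s] ((Gp p n r).derivative * Qp p n)).eval t|
        ≤ 2 ^ s * (A * (n : ℝ) ^ r) * (2 ^ k * M * n) := by
      refine abs_eval_iter_deriv_mul_le _ _ s t _ _ hCD hQD (fun l hl => ?_) (fun l hl => ?_)
      · rw [← Function.iterate_succ_apply]
        exact hAb (l + 1) (by omega) n hn t ht
      · exact hQ' l (by omega)
    have h2 : |(Polynomial.derivative^[s] (Gp p n r * (Qp p n).derivative)).eval t|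
        ≤ 2 ^ s * (A * (n : ℝ) ^ r) * (2 ^ k * M * n) := by
      refine abs_eval_iter_deriv_mul_le _ _ s t _ _ hCD hQD (fun l hl => ?_) (fun l hl => ?_)
      · exact hAb l (by omega) n hn t ht
      · rw [← Function.iterate_succ_apply]
        exact hQ' (l + 1) (by omega)
    rw [hG]
    rw [Polynomial.iterate_derivative_sub, Polynomial.iterate_derivative_C_mul]
    have habs : |(Polynomial.derivative^[s] ((Gp p n r).derivative * Qp p n)).eval t
        - (Polynomial.C ((r : ℝ) + 1/2) * Polynomial.derivative^[s]
            (Gp p n r * (Qp p n).derivative)).eval t| ≤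
        2 ^ s * (A * (n : ℝ) ^ r) * (2 ^ k * M * n)
          + ((r : ℝ) + 1/2) * (2 ^ s * (A * (n : ℝ) ^ r) * (2 ^ k * M * n)) := by
      refine (abs_sub _ _).trans (add_le_add h1 ?_)
      rw [Polynomial.eval_mul, Polynomial.eval_C, abs_mul]
      refine mul_le_mul (le_of_eq (abs_of_pos (by positivity))) h2 (abs_nonneg _) (by positivity)
    rw [Polynomial.eval_sub]
    refine habs.trans ?_
    have h2s : (2 : ℝ) ^ s ≤ 2 ^ k := pow_le_pow_right₀ one_le_two (by omega)
    have h2k : (0:ℝ) < 2 ^ k := by positivity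
    have hr2 : (1 + ((r:ℝ) + 1/2)) ≤ (r : ℝ) + 2 := by linarith [Nat.cast_nonneg (α := ℝ) r]
    have key : (1 + ((r:ℝ) + 1/2)) * (2 ^ s * (A * (n : ℝ) ^ r) * (2 ^ k * M * n))
        ≤ ((r : ℝ) + 2) * (2 ^ k * (A * (n : ℝ) ^ r) * (2 ^ k * M * n)) := by
      gcongr <;> first | positivity | linarith [h2s]
    have heq : ((r : ℝ) + 2) * (2 ^ k * (A * (n : ℝ) ^ r) * (2 ^ k * M * n))
        = ((r : ℝ) + 2) * 4 ^ k * M * A * (n : ℝ) ^ (r + 1) := by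
      have h4 : (4 : ℝ) ^ k = 2 ^ k * 2 ^ k := by rw [← mul_pow]; norm_num
      rw [h4, pow_succ]; ring
    linarith
end Bounds2

lemma w_iter_deriv (p : ℕ → Polynomial ℝ) (n r : ℕ) :
    ∀ u : ℝ, 0 < (Qp p n).eval u →
      iteratedDeriv r (fun x => (Real.sqrt ((Qp p n).eval x))⁻¹) u
        = (Gp p n r).eval u * ((Real.sqrt ((Qp p n).eval u))⁻¹) ^ (2 * r + 1) := by
  induction r with
  | zero =>
    intro u hu
    simp [show Gp p n 0 = 1 from rfl]
  | succ r ih =>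
    intro u hu
    have hU : IsOpen {x : ℝ | 0 < (Qp p n).eval x} :=
      isOpen_lt continuous_const (Qp p n).continuous
    have hmem : {x : ℝ | 0 < (Qp p n).eval x} ∈ nhds u := hU.mem_nhds hu
    have hev : iteratedDeriv r (fun x => (Real.sqrt ((Qp p n).eval x))⁻¹)
        =ᶠ[nhds u] fun x => (Gp p n r).eval x * ((Real.sqrt ((Qp p n).eval x))⁻¹) ^ (2 * r + 1) :=
      Filter.eventuallyEq_of_mem hmem fun x hx => ih x hx
    rw [iteratedDeriv_succ, hev.deriv_eq]
    have hs0 : Real.sqrt ((Qp p n).eval u) ≠ 0 := (Real.sqrt_pos.mpr hu).ne'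
    have hFj : HasDerivAt (fun x => (Qp p n).eval x) ((Qp p n).derivative.eval u) u :=
      (Qp p n).hasDerivAt u
    have hsq : HasDerivAt (fun x => Real.sqrt ((Qp p n).eval x))
        (1 / (2 * Real.sqrt ((Qp p n).eval u)) * (Qp p n).derivative.eval u) u :=
      (Real.hasDerivAt_sqrt hu.ne').comp u hFj
    have hw : HasDerivAt (fun x => (Real.sqrt ((Qp p n).eval x))⁻¹)
        (-(1 / (2 * Real.sqrt ((Qp p n).eval u)) * (Qp p n).derivative.eval u)
          / (Real.sqrt ((Qp p n).eval u)) ^ 2) u := hsq.inv hs0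
    have hG : HasDerivAt (fun x => (Gp p n r).eval x) ((Gp p n r).derivative.eval u) u :=
      (Gp p n r).hasDerivAt u
    have hwp : HasDerivAt (fun x => ((Real.sqrt ((Qp p n).eval x))⁻¹) ^ (2 * r + 1))
        ((2 * r + 1 : ℕ) * ((Real.sqrt ((Qp p n).eval u))⁻¹) ^ (2 * r + 1 - 1)
          * (-(1 / (2 * Real.sqrt ((Qp p n).eval u)) * (Qp p n).derivative.eval u)
              / (Real.sqrt ((Qp p n).eval u)) ^ 2)) u := hw.pow _
    rw [(hG.fun_mul hwp).deriv]
    have hGsucc : Gp p n (r + 1) = (Gp p n r).derivative * Qp p n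
        - Polynomial.C ((r : ℝ) + 1/2) * (Gp p n r * (Qp p n).derivative) := rfl
    rw [hGsucc]
    have hs2 : Real.sqrt ((Qp p n).eval u) ^ 2 = (Qp p n).eval u := Real.sq_sqrt hu.le
    simp only [Polynomial.eval_sub, Polynomial.eval_mul, Polynomial.eval_C]
    have h1 : 2 * r + 1 - 1 = 2 * r := by omega
    rw [h1]
    generalize hsg : √(Polynomial.eval u (Qp p n)) = s at hs0 hs2 ⊢
    generalize hFg : Polynomial.eval u (Qp p n) = F at hs2 ⊢
    rw [← hs2]
    push_cast
    simp only [inv_pow]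
    field_simp
    ring

lemma poly_contDiff (P : Polynomial ℝ) : ContDiff ℝ ⊤ fun x => P.eval x := by
  induction P using Polynomial.induction_on' with
  | add p q hp hq => simpa using hp.add hq
  | monomial i c =>
    simpa [Polynomial.eval_monomial] using (contDiff_const (c := c)).mul (contDiff_id.pow i)

lemma iterDeriv_eval (P : Polynomial ℝ) (i : ℕ) (t : ℝ) :
    iteratedDeriv i (fun x => P.eval x) t = (Polynomial.derivative^[i] P).eval t := by
  induction i generalizing P with
  | zero => simp
  | succ i ih =>
    rw [iteratedDeriv_succ', Function.iterate_succ_apply]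
    have : deriv (fun x => P.eval x) = fun x => P.derivative.eval x :=
      funext fun x => P.deriv
    rw [this]; exact ih _

section WBound

variable (a b M B : ℝ) (k : ℕ) (p : ℕ → Polynomial ℝ)

lemma w_bound (hB : 0 < B)
    (hGb : ∀ r : ℕ, ∃ A : ℝ, 0 < A ∧ ∀ s : ℕ, r + s ≤ k → ∀ n : ℕ, 1 ≤ n →
      ∀ t ∈ Set.Icc ((n : ℝ) * a) ((n : ℝ) * b),
        |(Polynomial.derivative^[s] (Gp p n r)).eval t| ≤ A * (n : ℝ) ^ r)
    (hlow : ∀ n : ℕ, 1 ≤ n → ∀ t ∈ Set.Icc ((n : ℝ) * a) ((n : ℝ) * b),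
      (Qp p n).eval t ≥ B * n) :
    ∃ D : ℝ, 0 < D ∧ ∀ r ≤ k, ∀ n : ℕ, 1 ≤ n → ∀ t ∈ Set.Icc ((n : ℝ) * a) ((n : ℝ) * b),
      |iteratedDeriv r (fun x => (Real.sqrt ((Qp p n).eval x))⁻¹) t|
        ≤ D * (Real.sqrt n)⁻¹ := by
  choose A hApos hA using hGb
  refine ⟨∑ r ∈ Finset.range (k + 1), A r * ((B : ℝ)⁻¹) ^ r * (Real.sqrt B)⁻¹, ?_, ?_⟩
  · refine Finset.sum_pos (fun r _ => ?_) ⟨0, Finset.mem_range.mpr (Nat.succ_pos _)⟩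
    exact mul_pos (mul_pos (hApos r) (pow_pos (inv_pos.mpr hB) r))
      (inv_pos.mpr (Real.sqrt_pos.mpr hB))
  intro r hr n hn t ht
  have hn0 : (0 : ℝ) < n := by exact_mod_cast hn
  have hn1 : (1 : ℝ) ≤ n := by exact_mod_cast hn
  have hBn : (0 : ℝ) < B * n := mul_pos hB hn0
  have hFt : B * n ≤ (Qp p n).eval t := hlow n hn t ht
  have hFt0 : 0 < (Qp p n).eval t := lt_of_lt_of_le hBn hFt
  rw [w_iter_deriv p n r t hFt0]
  have hwle : (Real.sqrt ((Qp p n).eval t))⁻¹ ≤ (Real.sqrt (B * n))⁻¹ := by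
    apply inv_anti₀ (Real.sqrt_pos.mpr hBn)
    exact Real.sqrt_le_sqrt hFt
  have hw0 : 0 ≤ (Real.sqrt ((Qp p n).eval t))⁻¹ := by positivity
  rw [abs_mul, abs_of_nonneg (pow_nonneg hw0 _)]
  have h1 : |(Gp p n r).eval t| ≤ A r * (n : ℝ) ^ r := by
    simpa using hA r 0 (by omega) n hn t ht
  have h2 : ((Real.sqrt ((Qp p n).eval t))⁻¹) ^ (2 * r + 1)
      ≤ ((Real.sqrt (B * n))⁻¹) ^ (2 * r + 1) := pow_le_pow_left₀ hw0 hwle _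
  have h3 : ((Real.sqrt (B * n))⁻¹) ^ (2 * r + 1)
      = ((B * n)⁻¹) ^ r * (Real.sqrt (B * n))⁻¹ := by
    have : ((Real.sqrt (B * n))⁻¹) ^ (2 * r + 1)
        = (((Real.sqrt (B * n))⁻¹) ^ 2) ^ r * (Real.sqrt (B * n))⁻¹ := by
      rw [← pow_mul, ← pow_succ]
    rw [this, inv_pow, Real.sq_sqrt hBn.le]
  calc |(Gp p n r).eval t| * ((Real.sqrt ((Qp p n).eval t))⁻¹) ^ (2 * r + 1)
      ≤ (A r * (n : ℝ) ^ r) * (((B * n)⁻¹) ^ r * (Real.sqrt (B * n))⁻¹) := by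
        rw [← h3]
        exact mul_le_mul h1 h2 (pow_nonneg hw0 _) (mul_pos (hApos r) (pow_pos hn0 r)).le
    _ = (A r * ((B : ℝ)⁻¹) ^ r * (Real.sqrt B)⁻¹) * (Real.sqrt n)⁻¹ := by
        rw [Real.sqrt_mul hB.le, mul_inv, mul_inv, mul_pow]
        have hnr : ((n:ℝ)⁻¹) ^ r = ((n:ℝ) ^ r)⁻¹ := inv_pow _ _
        rw [hnr]
        field_simp
    _ ≤ (∑ r ∈ Finset.range (k + 1), A r * ((B : ℝ)⁻¹) ^ r * (Real.sqrt B)⁻¹) * (Real.sqrt n)⁻¹ := by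
        have hsb : (0:ℝ) < Real.sqrt B := Real.sqrt_pos.mpr hB
        refine mul_le_mul_of_nonneg_right ?_ (by positivity)
        refine Finset.single_le_sum (f := fun r => A r * ((B : ℝ)⁻¹) ^ r * (Real.sqrt B)⁻¹)
          (fun i _ => by have := hApos i; positivity) (Finset.mem_range.mpr (by omega))

end WBound

theorem sum_sq_iteratedDeriv_q_bounded (a b : ℝ) (hab : a < b) (k : ℕ) (hk : 1 ≤ k)
    (M B : ℝ) (hM : 0 < M) (hB : 0 < B) (p : ℕ → Polynomial ℝ)
    (hup : ∀ n : ℕ, 1 ≤ n → ∀ l ≤ k, ∀ m ≤ k, ∀ t ∈ Set.Icc ((n : ℝ) * a) ((n : ℝ) * b),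
      |Kder p n l m (t / n) (t / n)| ≤ M * (n : ℝ) ^ (l + m + 1))
    (hlow : ∀ n : ℕ, 1 ≤ n → ∀ t ∈ Set.Icc ((n : ℝ) * a) ((n : ℝ) * b),
      Kder p n 0 0 (t / n) (t / n) ≥ B * n) :
    ∃ C : ℝ, 0 < C ∧ ∀ n : ℕ, 1 ≤ n → ∀ t ∈ Set.Icc ((n : ℝ) * a) ((n : ℝ) * b),
      ∑ j ∈ Finset.range (n + 1),
        (iteratedDeriv k
            (fun u : ℝ => (p j).eval (u / (n : ℝ)) / Real.sqrt (Kder p n 0 0 (u / (n : ℝ)) (u / (n : ℝ)))) t) ^ 2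
        ≤ C := by
  have hQb := Qp_iter_bound a b M k p hM hup
  have hlow' : ∀ n : ℕ, 1 ≤ n → ∀ t ∈ Set.Icc ((n : ℝ) * a) ((n : ℝ) * b),
      (Qp p n).eval t ≥ B * n := by
    intro n hn t ht
    rw [Qp_eval]
    exact hlow n hn t ht
  obtain ⟨D, hD, hDb⟩ := w_bound a b B k p hB (Gp_bound a b M k p hM hQb) hlow'
  refine ⟨((k : ℝ) + 1) ^ 2 * 4 ^ k * D ^ 2 * M, by positivity, ?_⟩
  intro n hn t ht
  have hn0 : (0 : ℝ) < n := by exact_mod_cast hn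
  set w : ℝ → ℝ := fun x => (Real.sqrt ((Qp p n).eval x))⁻¹ with hw_def
  set g : ℕ → ℝ → ℝ := fun j u => (Rp p n j).eval u with hg_def
  have hq : ∀ j : ℕ, (fun u : ℝ => (p j).eval (u / (n : ℝ))
      / Real.sqrt (Kder p n 0 0 (u / (n : ℝ)) (u / (n : ℝ)))) = fun u => g j u * w u := by
    intro j
    funext u
    have h0 : (Rp p n j).eval u = (p j).eval (u / n) := by
      simpa using Rp_iter_eval p n j 0 u
    rw [hg_def, hw_def]
    simp only [h0, Qp_eval p n u]
    exact div_eq_mul_inv _ _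
  simp only [hq]
  -- the open set where Q is positive
  set U : Set ℝ := {x : ℝ | 0 < (Qp p n).eval x} with hU_def
  have hUopen : IsOpen U := isOpen_lt continuous_const (Qp p n).continuous
  have htU : t ∈ U := lt_of_lt_of_le (mul_pos hB hn0) (hlow' n hn t ht)
  have hUuniq : UniqueDiffOn ℝ U := hUopen.uniqueDiffOn
  have hconv : ∀ (f : ℝ → ℝ) (i : ℕ),
      ‖iteratedFDerivWithin ℝ i f U t‖ = |iteratedDeriv i f t| := by
    intro f i
    rw [iteratedFDerivWithin_of_isOpen i hUopen htU,
      norm_iteratedFDeriv_eq_norm_iteratedDeriv, Real.norm_eq_abs]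
  have hgC : ∀ j, ContDiffOn ℝ ⊤ (g j) U := fun j => (poly_contDiff (Rp p n j)).contDiffOn
  have hwC : ContDiffOn ℝ ⊤ w U := by
    refine ContDiffOn.inv (ContDiffOn.sqrt ((poly_contDiff (Qp p n)).contDiffOn)
      (fun x hx => (show (0:ℝ) < _ from hx).ne')) ?_
    exact fun x hx => (Real.sqrt_pos.mpr (show (0:ℝ) < _ from hx)).ne'
  -- step B : Leibniz bound per j
  have hleib : ∀ j : ℕ, |iteratedDeriv k (fun u => g j u * w u) t|
      ≤ ∑ i ∈ Finset.range (k + 1),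
          (k.choose i : ℝ) * |iteratedDeriv i (g j) t| * |iteratedDeriv (k - i) w t| := by
    intro j
    have h := norm_iteratedFDerivWithin_mul_le (𝕜 := ℝ) (hgC j) hwC hUuniq htU
      (le_top : (k : WithTop ℕ∞) ≤ ⊤)
    rw [hconv] at h
    refine h.trans (le_of_eq (Finset.sum_congr rfl fun i _ => ?_))
    rw [hconv, hconv]
  set W : ℝ := ∑ i ∈ Finset.range (k + 1),
    ((k.choose i : ℝ) * |iteratedDeriv (k - i) w t|) ^ 2 with hW_def
  have hW0 : 0 ≤ W := Finset.sum_nonneg fun i _ => sq_nonneg _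
  -- step C : Cauchy-Schwarz per j
  have hstep : ∀ j : ℕ, (iteratedDeriv k (fun u => g j u * w u) t) ^ 2
      ≤ W * ∑ i ∈ Finset.range (k + 1), |iteratedDeriv i (g j) t| ^ 2 := by
    intro j
    have h2 : ∑ i ∈ Finset.range (k + 1),
        (k.choose i : ℝ) * |iteratedDeriv i (g j) t| * |iteratedDeriv (k - i) w t|
        = ∑ i ∈ Finset.range (k + 1),
          ((k.choose i : ℝ) * |iteratedDeriv (k - i) w t|) * |iteratedDeriv i (g j) t| :=
      Finset.sum_congr rfl fun i _ => by ring
    calc (iteratedDeriv k (fun u => g j u * w u) t) ^ 2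
        = |iteratedDeriv k (fun u => g j u * w u) t| ^ 2 := (sq_abs _).symm
      _ ≤ (∑ i ∈ Finset.range (k + 1),
            (k.choose i : ℝ) * |iteratedDeriv i (g j) t| * |iteratedDeriv (k - i) w t|) ^ 2 :=
          pow_le_pow_left₀ (abs_nonneg _) (hleib j) 2
      _ = (∑ i ∈ Finset.range (k + 1),
            ((k.choose i : ℝ) * |iteratedDeriv (k - i) w t|) * |iteratedDeriv i (g j) t|) ^ 2 := by
          rw [h2]
      _ ≤ W * ∑ i ∈ Finset.range (k + 1), |iteratedDeriv i (g j) t| ^ 2 :=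
          Finset.sum_mul_sq_le_sq_mul_sq _ _ _
  -- bound on the g-sums
  have hgsum : ∑ j ∈ Finset.range (n + 1), ∑ i ∈ Finset.range (k + 1),
      |iteratedDeriv i (g j) t| ^ 2 ≤ ((k : ℝ) + 1) * (M * n) := by
    rw [Finset.sum_comm]
    have hper : ∀ i ∈ Finset.range (k + 1),
        ∑ j ∈ Finset.range (n + 1), |iteratedDeriv i (g j) t| ^ 2 ≤ M * n := by
      intro i hi
      have hik : i ≤ k := Nat.lt_succ_iff.mp (Finset.mem_range.mp hi)
      have heq : ∑ j ∈ Finset.range (n + 1), |iteratedDeriv i (g j) t| ^ 2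
          = (((n:ℝ))⁻¹ ^ i) ^ 2 * Kder p n i i (t / n) (t / n) := by
        rw [Kder, Finset.mul_sum]
        refine Finset.sum_congr rfl fun j _ => ?_
        rw [hg_def]
        simp only [iterDeriv_eval, Rp_iter_eval]
        rw [sq_abs, mul_pow]
        ring
      rw [heq]
      have hKb : Kder p n i i (t / n) (t / n) ≤ M * (n : ℝ) ^ (i + i + 1) :=
        (le_abs_self _).trans (hup n hn i hik i hik t ht)
      have hKnn : (0:ℝ) ≤ (((n:ℝ))⁻¹ ^ i) ^ 2 := by positivity
      refine (mul_le_mul_of_nonneg_left hKb hKnn).trans (le_of_eq ?_)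
      have hne : (n:ℝ) ≠ 0 := hn0.ne'
      field_simp
      rw [one_div, inv_pow, inv_pow, show i + i + 1 = i * 2 + 1 by ring, pow_succ _ (i * 2), ← pow_mul, ← mul_assoc,
        inv_mul_cancel₀ (pow_ne_zero _ hne), one_mul]
    calc ∑ i ∈ Finset.range (k + 1), ∑ j ∈ Finset.range (n + 1), |iteratedDeriv i (g j) t| ^ 2
        ≤ ∑ i ∈ Finset.range (k + 1), (M * n) := Finset.sum_le_sum hper
      _ = ((k : ℝ) + 1) * (M * n) := by
          rw [Finset.sum_const, Finset.card_range, nsmul_eq_mul]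
          push_cast
          ring
  -- bound on W
  have hWb : W ≤ (((k : ℝ) + 1) * 4 ^ k * D ^ 2) * ((n : ℝ))⁻¹ := by
    have hper : ∀ i ∈ Finset.range (k + 1),
        ((k.choose i : ℝ) * |iteratedDeriv (k - i) w t|) ^ 2
          ≤ (2 ^ k * (D * (Real.sqrt n)⁻¹)) ^ 2 := by
      intro i hi
      have hch : (k.choose i : ℝ) ≤ 2 ^ k := by
        have h1 : k.choose i ≤ ∑ l ∈ Finset.range (k + 1), k.choose l :=
          Finset.single_le_sum (fun l _ => Nat.zero_le _) hi
        rw [Nat.sum_range_choose] at h1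
        exact_mod_cast h1
      have hwb : |iteratedDeriv (k - i) w t| ≤ D * (Real.sqrt n)⁻¹ :=
        hDb (k - i) (Nat.sub_le _ _) n hn t ht
      refine pow_le_pow_left₀ (by positivity) ?_ 2
      exact mul_le_mul hch hwb (abs_nonneg _) (by positivity)
    refine (Finset.sum_le_sum hper).trans (le_of_eq ?_)
    rw [Finset.sum_const, Finset.card_range, nsmul_eq_mul]
    have hs2 : ((Real.sqrt n)⁻¹) ^ 2 = ((n:ℝ))⁻¹ := by
      rw [inv_pow, Real.sq_sqrt hn0.le]
    rw [mul_pow, mul_pow, hs2]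
    have h4 : ((2:ℝ) ^ k) ^ 2 = 4 ^ k := by
      rw [← pow_mul, show (4:ℝ) = 2^2 by norm_num, ← pow_mul]
      ring_nf
    rw [h4]
    push_cast
    ring
  -- final combination
  calc ∑ j ∈ Finset.range (n + 1), (iteratedDeriv k (fun u => g j u * w u) t) ^ 2
      ≤ ∑ j ∈ Finset.range (n + 1), W * ∑ i ∈ Finset.range (k + 1),
          |iteratedDeriv i (g j) t| ^ 2 := Finset.sum_le_sum fun j _ => hstep j
    _ = W * ∑ j ∈ Finset.range (n + 1), ∑ i ∈ Finset.range (k + 1),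
          |iteratedDeriv i (g j) t| ^ 2 := by rw [Finset.mul_sum]
    _ ≤ ((((k : ℝ) + 1) * 4 ^ k * D ^ 2) * ((n : ℝ))⁻¹) * (((k : ℝ) + 1) * (M * n)) := by
        refine mul_le_mul hWb hgsum (Finset.sum_nonneg fun j _ =>
          Finset.sum_nonneg fun i _ => sq_nonneg _) (by positivity)
    _ = ((k : ℝ) + 1) ^ 2 * 4 ^ k * D ^ 2 * M := by
        field_simp
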